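/- arXiv:2201.06981 — 2 statements merged into one kernel-verified Lean document; each statement's English description precedes it below -/
import Mathlib

section
/- A stochastic matrix (a matrix with nonnegative entries where each column sums to 1) is invertible with stochastic inverse if and only if it is a permutation matrix. -/
open Finset

/-- A stochastic matrix is invertible with stochastic inverse iff it is a permutation matrix. -/
theorem stochastic_invertible_iff_permutation
    {X Y : Type} [Fintype X] [Fintype Y] [DecidableEq X] [DecidableEq Y]
    (f : Y → X → ℝ) (hf0 : ∀ y x, 0 ≤ f y x) (hf1 : ∀ x, ∑ y, f y x = 1) :
    (∃ g : X → Y → ℝ,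
      (∀ x y, 0 ≤ g x y) ∧ (∀ y, ∑ x, g x y = 1) ∧
      (∀ x x', ∑ y, g x y * f y x' = if x = x' then (1:ℝ) else 0) ∧
      (∀ y y', ∑ x, f y x * g x y' = if y = y' then (1:ℝ) else 0))
    ↔ ∃ τ : X ≃ Y, ∀ y x, f y x = if τ x = y then (1:ℝ) else 0 := by
  constructor
  · rintro ⟨g, hg0, hg1, hgf, hfg⟩
    -- key1: if f y x > 0 then g x y = 1
    have key1 : ∀ y x, 0 < f y x → g x y = 1 := by
      intro y x hpos
      have hz : ∀ x', x' ≠ x → g x' y = 0 := by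
        intro x' hne
        have h := hgf x' x
        rw [if_neg hne] at h
        have h2 := (Finset.sum_eq_zero_iff_of_nonneg
          (fun y' _ => mul_nonneg (hg0 x' y') (hf0 y' x))).mp h y (Finset.mem_univ y)
        rcases mul_eq_zero.mp h2 with h' | h'
        · exact h'
        · exact absurd h' (ne_of_gt hpos)
      have h := hg1 y
      rwa [Finset.sum_eq_single x (fun x' _ hne => hz x' hne)
        (fun hx => absurd (Finset.mem_univ x) hx)] at h
    -- key2: if g x y > 0 then f y x = 1
    have key2 : ∀ x y, 0 < g x y → f y x = 1 := by
      intro x y hpos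
      have hz : ∀ y', y' ≠ y → f y' x = 0 := by
        intro y' hne
        have h := hfg y' y
        rw [if_neg hne] at h
        have h2 := (Finset.sum_eq_zero_iff_of_nonneg
          (fun x' _ => mul_nonneg (hf0 y' x') (hg0 x' y))).mp h x (Finset.mem_univ x)
        rcases mul_eq_zero.mp h2 with h' | h'
        · exact h'
        · exact absurd h' (ne_of_gt hpos)
      have h := hf1 x
      rwa [Finset.sum_eq_single y (fun y' _ hne => hz y' hne)
        (fun hy => absurd (Finset.mem_univ y) hy)] at h
    -- choose a positive entry in each column
    have hex : ∀ x, ∃ y, 0 < f y x := by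
      intro x
      by_contra h
      push_neg at h
      have h0 : ∑ y, f y x = 0 :=
        Finset.sum_eq_zero (fun y _ => le_antisymm (h y) (hf0 y x))
      rw [hf1 x] at h0; norm_num at h0
    choose t ht using hex
    have htx : ∀ x, f (t x) x = 1 := by
      intro x
      exact key2 x (t x) (by rw [key1 (t x) x (ht x)]; norm_num)
    have hgtx : ∀ x, g x (t x) = 1 := fun x => key1 (t x) x (ht x)
    -- f is the indicator of t
    have hind : ∀ y x, f y x = if t x = y then 1 else 0 := by
      intro y x
      by_cases hy : t x = y
      · subst hy; simp [htx x]
      · rw [if_neg hy]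
        have hsum : ∑ y' ∈ Finset.univ.erase (t x), f y' x = 0 := by
          have h := Finset.add_sum_erase Finset.univ (fun y' => f y' x)
            (Finset.mem_univ (t x))
          rw [hf1 x, htx x] at h
          linarith
        exact (Finset.sum_eq_zero_iff_of_nonneg
          (fun y' _ => hf0 y' x)).mp hsum y
          (Finset.mem_erase.mpr ⟨fun h => hy h.symm, Finset.mem_univ y⟩)
    -- t is injective
    have hinj : Function.Injective t := by
      intro x x' hxx
      by_contra hne
      have h1 : g x (t x) = 1 := hgtx x
      have h2 : g x' (t x) = 1 := by rw [hxx]; exact hgtx x'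
      have hsub : ({x, x'} : Finset X) ⊆ Finset.univ := Finset.subset_univ _
      have hle : ∑ x'' ∈ ({x, x'} : Finset X), g x'' (t x) ≤ ∑ x'', g x'' (t x) :=
        Finset.sum_le_sum_of_subset_of_nonneg hsub (fun i _ _ => hg0 i (t x))
      rw [Finset.sum_pair hne, h1, h2, hg1 (t x)] at hle
      linarith
    -- t is surjective
    have hsurj : Function.Surjective t := by
      intro y
      have hexg : ∃ x, 0 < g x y := by
        by_contra h
        push_neg at h
        have h0 : ∑ x, g x y = 0 :=
          Finset.sum_eq_zero (fun x _ => le_antisymm (h x) (hg0 x y))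
        rw [hg1 y] at h0; norm_num at h0
      obtain ⟨x, hx⟩ := hexg
      refine ⟨x, ?_⟩
      have hfyx : f y x = 1 := key2 x y hx
      have := hind y x
      rw [hfyx] at this
      by_contra hne
      rw [if_neg hne] at this
      norm_num at this
    exact ⟨Equiv.ofBijective t ⟨hinj, hsurj⟩, fun y x => hind y x⟩
  · rintro ⟨τ, hτ⟩
    refine ⟨fun x y => if τ x = y then 1 else 0, ?_, ?_, ?_, ?_⟩
    · intro x y; dsimp only; split <;> norm_num
    · intro y
      rw [Finset.sum_eq_single (τ.symm y)]
      · simp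
      · intro x _ hne
        dsimp only
        rw [if_neg]
        intro h
        exact hne (by rw [← h]; simp)
      · intro h; exact absurd (Finset.mem_univ _) h
    · intro x x'
      simp only [hτ]
      rw [Finset.sum_eq_single (τ x)]
      · by_cases h : x = x'
        · subst h; simp
        · rw [if_neg h, if_pos rfl, if_neg (fun hh : τ x' = τ x => h (τ.injective hh.symm))]
          ring
      · intro y _ hne
        rw [if_neg (fun h : τ x = y => hne h.symm), zero_mul]
      · intro h; exact absurd (Finset.mem_univ _) h
    · intro y y'
      simp only [hτ]
      rw [Finset.sum_eq_single (τ.symm y)]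
      · by_cases h : y = y'
        · subst h; simp
        · rw [if_neg h]
          rw [if_pos (by simp)]
          rw [if_neg (by simpa using h)]
          ring
      · intro x _ hne
        rw [if_neg (fun h : τ x = y => hne (by rw [← h]; simp)), zero_mul]
      · intro h; exact absurd (Finset.mem_univ _) h
end

section
/- Suppose f : X → Y is a stochastic matrix, τ_X : X → X' and τ_Y : Y → Y' are surjective functions with induced deterministic transformations α_X, α_Y. Then there exists a stochastic matrix g : X' → Y' with α_Y · f = g · α_X if and only if f is causally homogeneous with respect to τ_X and τ_Y, i.e., for every x' ∈ X' and y' ∈ Y', the value Σ_{y : τ_Y(y) = y'} f(y,x) is the same for all x with τ_X(x) = x'. -/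
open Finset

lemma lhs_eq {Y Y' : Type} [Fintype Y] [DecidableEq Y'] (f : Y → ℝ) (τY : Y → Y') (y' : Y') :
    ∑ y, (if τY y = y' then (1:ℝ) else 0) * f y
      = ∑ y ∈ univ.filter (fun y => τY y = y'), f y := by
  rw [Finset.sum_filter]
  congr 1; ext y; by_cases h : τY y = y' <;> simp [h]

/-- Existence of a high-level stochastic matrix making the square with deterministic
transformations commute is equivalent to causal homogeneity. -/
theorem abstraction_exists_iff_causally_homogeneous
    {X X' Y Y' : Type} [Fintype X] [Fintype X'] [Fintype Y] [Fintype Y']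
    [DecidableEq X'] [DecidableEq Y']
    [Nonempty X] [Nonempty X'] [Nonempty Y] [Nonempty Y']
    (f : Y → X → ℝ) (hf0 : ∀ y x, 0 ≤ f y x) (hf1 : ∀ x, ∑ y, f y x = 1)
    (τX : X → X') (τY : Y → Y')
    (hτX : Function.Surjective τX) (hτY : Function.Surjective τY) :
    (∃ g : Y' → X' → ℝ,
      (∀ y' x', 0 ≤ g y' x') ∧ (∀ x', ∑ y', g y' x' = 1) ∧
      (∀ y' x, ∑ y, (if τY y = y' then (1:ℝ) else 0) * f y x
              = ∑ x', g y' x' * (if τX x = x' then (1:ℝ) else 0)))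
    ↔ ∀ (x' : X') (y' : Y') (x₁ x₂ : X), τX x₁ = x' → τX x₂ = x' →
        (∑ y ∈ univ.filter (fun y => τY y = y'), f y x₁)
        = ∑ y ∈ univ.filter (fun y => τY y = y'), f y x₂ := by
  have rhs_eq : ∀ (g : Y' → X' → ℝ) (y' : Y') (x : X),
      ∑ x', g y' x' * (if τX x = x' then (1:ℝ) else 0) = g y' (τX x) := by
    intro g y' x
    rw [Finset.sum_eq_single (τX x)] <;> simp +contextual [eq_comm]
  constructor
  · rintro ⟨g, -, -, hcomm⟩ x' y' x₁ x₂ h₁ h₂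
    have e1 := hcomm y' x₁
    have e2 := hcomm y' x₂
    rw [rhs_eq, lhs_eq] at e1 e2
    rw [e1, e2, h₁, h₂]
  · intro h
    set s : X' → X := fun x' => Function.surjInv hτX x'
    have hs : ∀ x', τX (s x') = x' := fun x' => Function.surjInv_eq hτX x'
    refine ⟨fun y' x' => ∑ y ∈ univ.filter (fun y => τY y = y'), f y (s x'),
      fun y' x' => Finset.sum_nonneg fun y _ => hf0 y _, ?_, ?_⟩
    · intro x'
      rw [← hf1 (s x')]
      rw [← Finset.sum_fiberwise_of_maps_to (g := τY) (fun y _ => Finset.mem_univ (τY y))]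
    · intro y' x
      rw [rhs_eq (fun y' x' => ∑ y ∈ univ.filter (fun y => τY y = y'), f y (s x')) y' x, lhs_eq]
      exact h (τX x) y' x (s (τX x)) rfl (hs _)
end
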